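/- Let n ≥ 2 and let λ, ν ∈ ℂ with ν − λ a nonnegative integer. Then x_n·𝒦_{λ,ν} = −2 γ(λ − (n−1)/2, ν−λ)·𝒦_{λ+1,ν} as tempered distributions on ℝ^n. -/

import Mathlib

/-- Partial derivative ∂_p of a complex-valued function on ℝ^n. -/
noncomputable def pd {n : ℕ} (p : Fin n) (f : (Fin n → ℝ) → ℂ) : (Fin n → ℝ) → ℂ :=
  fun x => fderiv ℝ f x (Pi.single p 1)

/-- Δ' = ∂_1² + ⋯ + ∂_{n−1}², the Laplacian in the first n−1 variables on ℝ^n. -/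
noncomputable def lapP {n : ℕ} (f : (Fin n → ℝ) → ℂ) : (Fin n → ℝ) → ℂ :=
  fun x => ∑ j ∈ Finset.univ.filter (fun j : Fin n => (j : ℕ) < n - 1), pd j (pd j f) x

/-- ∂_n, the partial derivative in the last variable on ℝ^n. -/
noncomputable def pdLast {n : ℕ} (f : (Fin n → ℝ) → ℂ) : (Fin n → ℝ) → ℂ :=
  if h : 0 < n then pd ⟨n - 1, by omega⟩ f else 0

/-- The coefficient of z^{l−2k} in the renormalized Gegenbauer polynomial
C̃_l^α(z) = Σ_{k=0}^{⌊l/2⌋} (−1)^k (∏_{m=⌊(l+1)/2⌋}^{l−k−1}(α+m)) (2z)^{l−2k}/(k!(l−2k)!). -/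
noncomputable def gegenCoeff (α : ℂ) (l k : ℕ) : ℂ :=
  (-1 : ℂ) ^ k * (∏ m ∈ Finset.Ico ((l + 1) / 2) (l - k), (α + (m : ℂ))) *
    2 ^ (l - 2 * k) / ((Nat.factorial k : ℂ) * (Nat.factorial (l - 2 * k) : ℂ))

/-- The action on a test function `φ` of the tempered distribution
`𝒦_{λ,ν} = Σ_{k=0}^{⌊l/2⌋} a_k (−1)^k (Δ')^k ∂_n^{l−2k} δ` on ℝ^n, where `l = ν − λ`
and `a_k` are the coefficients of `C̃_l^{λ−(n−1)/2}`; each `∂` contributes a sign `−1`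
and δ evaluates at 0.  By convention `𝒦_{λ,ν} = 0` when `l < 0`. -/
noncomputable def Kact (n : ℕ) (lam : ℂ) (l : ℤ) (φ : (Fin n → ℝ) → ℂ) : ℂ :=
  if 0 ≤ l then
    ∑ k ∈ Finset.range (l.toNat / 2 + 1),
      gegenCoeff (lam - ((n : ℂ) - 1) / 2) l.toNat k *
        ((-1 : ℂ) ^ k * ((-1 : ℂ) ^ (l.toNat - 2 * k) *
          (pdLast (n := n))^[l.toNat - 2 * k] ((lapP (n := n))^[k] φ) 0))
  else 0

/-- γ(μ, a) := 1 if a is odd, μ + a/2 if a is even. -/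
noncomputable def gam (mu : ℂ) (a : ℕ) : ℂ := if a % 2 = 1 then 1 else mu + ((a / 2 : ℕ) : ℂ)

namespace S11

abbrev Sm {n : ℕ} (f : (Fin n → ℝ) → ℂ) : Prop := ContDiff ℝ ((⊤ : ℕ∞) : WithTop ℕ∞) f

variable {n : ℕ}

noncomputable def coordC (i : Fin n) : (Fin n → ℝ) →L[ℝ] ℂ :=
  Complex.ofRealCLM.comp (ContinuousLinearMap.proj i)

lemma coordC_apply (i : Fin n) (x : Fin n → ℝ) : coordC i x = (x i : ℂ) := rfl

lemma pd_smooth {f : (Fin n → ℝ) → ℂ} (hf : Sm f) (p : Fin n) : Sm (pd p f) := by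
  unfold pd
  exact (hf.fderiv_right (by simp)).clm_apply contDiff_const

lemma pd_coord_mul (i p : Fin n) {f : (Fin n → ℝ) → ℂ} (hf : Sm f) :
    pd p (fun x => coordC i x * f x)
      = fun x => (((Pi.single p (1 : ℝ) : Fin n → ℝ) i : ℝ) : ℂ) * f x + coordC i x * pd p f x := by
  funext x
  have hc : DifferentiableAt ℝ (fun x : Fin n → ℝ => coordC i x) x :=
    (coordC i).differentiableAt
  have hfd : DifferentiableAt ℝ f x := hf.differentiable (by simp) x
  have := fderiv_fun_mul (𝕜 := ℝ) hc hfd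
  unfold pd
  rw [this]
  simp only [ContinuousLinearMap.add_apply, ContinuousLinearMap.smul_apply]
  rw [(coordC i).fderiv]
  simp [coordC_apply, smul_eq_mul]
  ring

lemma smul_cast (a : ℂ) (b : ℂ) : a • b = a * b := rfl

lemma coord_mul_smooth (i : Fin n) {f : (Fin n → ℝ) → ℂ} (hf : Sm f) :
    Sm (fun x => coordC i x * f x) :=
  ((coordC i).contDiff).mul hf

lemma lapP_smooth {f : (Fin n → ℝ) → ℂ} (hf : Sm f) : Sm (lapP f) := by
  unfold lapP
  exact ContDiff.sum (fun j _ => pd_smooth (pd_smooth hf j) j)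

lemma pd_coord_mul_ne (i p : Fin n) (hip : i ≠ p) {f : (Fin n → ℝ) → ℂ} (hf : Sm f) :
    pd p (fun x => coordC i x * f x) = fun x => coordC i x * pd p f x := by
  rw [pd_coord_mul i p hf]
  funext x
  rw [Pi.single_apply]
  simp [hip]

lemma lapP_coord_mul (i : Fin n) (hi : n - 1 ≤ (i : ℕ)) {f : (Fin n → ℝ) → ℂ} (hf : Sm f) :
    lapP (fun x => coordC i x * f x) = fun x => coordC i x * lapP f x := by
  unfold lapP
  funext x
  rw [Finset.mul_sum]
  refine Finset.sum_congr rfl (fun j hj => ?_)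
  have hj' : (j : ℕ) < n - 1 := (Finset.mem_filter.mp hj).2
  have hij : i ≠ j := fun h => by subst h; omega
  rw [pd_coord_mul_ne i j hij hf, pd_coord_mul_ne i j hij (pd_smooth hf j)]

lemma lapP_iter_coord_mul (i : Fin n) (hi : n - 1 ≤ (i : ℕ)) {f : (Fin n → ℝ) → ℂ}
    (hf : Sm f) (k : ℕ) :
    lapP^[k] (fun x => coordC i x * f x) = fun x => coordC i x * lapP^[k] f x := by
  induction k generalizing f with
  | zero => rfl
  | succ k ih =>
    rw [Function.iterate_succ_apply, lapP_coord_mul i hi hf, ih (lapP_smooth hf)]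
    funext x
    rw [Function.iterate_succ_apply]

lemma pdLast_eq (hn : 0 < n) : pdLast (n := n) = pd ⟨n - 1, by omega⟩ := by
  funext f; unfold pdLast; rw [dif_pos hn]

lemma pdLast_smooth (hn : 0 < n) {f : (Fin n → ℝ) → ℂ} (hf : Sm f) : Sm (pdLast f) := by
  rw [pdLast_eq hn]; exact pd_smooth hf _

lemma pdLast_iter_smooth (hn : 0 < n) {f : (Fin n → ℝ) → ℂ} (hf : Sm f) (m : ℕ) : Sm (pdLast^[m] f) := by
  induction m with
  | zero => exact hf
  | succ m ih => rw [Function.iterate_succ_apply']; exact pdLast_smooth hn ih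

lemma lapP_iter_smooth {f : (Fin n → ℝ) → ℂ} (hf : Sm f) (k : ℕ) : Sm (lapP^[k] f) := by
  induction k with
  | zero => exact hf
  | succ k ih => rw [Function.iterate_succ_apply']; exact lapP_smooth ih

lemma pdLast_coord_mul (hn : 0 < n) {f : (Fin n → ℝ) → ℂ} (hf : Sm f) :
    pdLast (fun x => coordC ⟨n - 1, by omega⟩ x * f x)
      = fun x => f x + coordC ⟨n - 1, by omega⟩ x * pdLast f x := by
  rw [pdLast_eq hn, pd_coord_mul _ _ hf]
  simp

lemma pdLast_add (hn : 0 < n) {f g : (Fin n → ℝ) → ℂ} (hf : Sm f) (hg : Sm g) :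
    pdLast (fun x => f x + g x) = fun x => pdLast f x + pdLast g x := by
  rw [pdLast_eq hn]
  funext x
  unfold pd
  rw [fderiv_fun_add (hf.differentiable (by simp) x) (hg.differentiable (by simp) x)]
  simp

lemma pdLast_const_mul (hn : 0 < n) {f : (Fin n → ℝ) → ℂ} (hf : Sm f) (c : ℂ) :
    pdLast (fun x => c * f x) = fun x => c * pdLast f x := by
  rw [pdLast_eq hn]
  funext x
  unfold pd
  rw [fderiv_const_mul (hf.differentiable (by simp) x) c]
  simp

lemma pdLast_iter_coord_mul (hn : 0 < n) {f : (Fin n → ℝ) → ℂ} (hf : Sm f) (m : ℕ) :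
    pdLast^[m + 1] (fun x => coordC ⟨n - 1, by omega⟩ x * f x)
      = fun x => ((m + 1 : ℕ) : ℂ) * pdLast^[m] f x
          + coordC ⟨n - 1, by omega⟩ x * pdLast^[m + 1] f x := by
  induction m generalizing f with
  | zero =>
    rw [Function.iterate_succ_apply, Function.iterate_zero_apply, pdLast_coord_mul hn hf]
    funext x
    simp [Function.iterate_succ_apply, Function.iterate_zero_apply]
  | succ m ih =>
    have h1 : Sm (fun x => ((m + 1 : ℕ) : ℂ) * pdLast^[m] f x) :=
      contDiff_const.mul (pdLast_iter_smooth hn hf m)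
    have h2 : Sm (fun x => coordC (⟨n - 1, by omega⟩ : Fin n) x * pdLast^[m + 1] f x) :=
      coord_mul_smooth _ (pdLast_iter_smooth hn hf (m + 1))
    rw [Function.iterate_succ_apply' (f := pdLast) (n := m + 1), ih hf, pdLast_add hn h1 h2,
      pdLast_const_mul hn (pdLast_iter_smooth hn hf m), pdLast_coord_mul hn (pdLast_iter_smooth hn hf (m + 1))]
    funext x
    simp only [Function.iterate_succ_apply' (f := pdLast)]
    push_cast
    ring

lemma pdLast_iter_coord_mul_zero (hn : 0 < n) {f : (Fin n → ℝ) → ℂ} (hf : Sm f) (m : ℕ) :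
    pdLast^[m] (fun x => coordC (⟨n - 1, by omega⟩ : Fin n) x * f x) 0
      = (m : ℂ) * pdLast^[m - 1] f 0 := by
  cases m with
  | zero => simp [coordC_apply]
  | succ m =>
    rw [pdLast_iter_coord_mul hn hf m]
    simp [coordC_apply]


lemma prod_eq (α : ℂ) (L k : ℕ) (hk : 2 * k < L) :
    (∏ m ∈ Finset.Ico ((L + 1) / 2) (L - k), (α + (m : ℂ)))
      = gam α L * ∏ m ∈ Finset.Ico ((L - 1 + 1) / 2) (L - 1 - k), ((α + 1) + (m : ℂ)) := by
  rw [Finset.prod_Ico_eq_prod_range, Finset.prod_Ico_eq_prod_range]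
  rcases Nat.mod_two_eq_zero_or_one L with h | h
  · -- even
    have h1 : (L - 1 + 1) / 2 = L / 2 := by omega
    have h2 : (L + 1) / 2 = L / 2 := by omega
    have h3 : L - 1 - k - (L - 1 + 1) / 2 = L / 2 - k - 1 := by omega
    have h4 : L - k - (L + 1) / 2 = (L / 2 - k - 1) + 1 := by omega
    rw [h3, h4, h2, h1, Finset.prod_range_succ']
    have hg : gam α L = α + ((L / 2 : ℕ) : ℂ) := by
      unfold gam; rw [if_neg (by omega)]
    rw [hg, Nat.add_zero, mul_comm]
    congr 1
    refine Finset.prod_congr rfl (fun j _ => ?_)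
    push_cast
    ring
  · -- odd
    have h1 : (L - 1 + 1) / 2 = L / 2 := by omega
    have h2 : (L + 1) / 2 = L / 2 + 1 := by omega
    have h3 : L - 1 - k - (L - 1 + 1) / 2 = L / 2 - k := by omega
    have h4 : L - k - (L + 1) / 2 = L / 2 - k := by omega
    have hg : gam α L = 1 := by unfold gam; rw [if_pos h]
    rw [h3, h4, h2, h1, hg, one_mul]
    refine Finset.prod_congr rfl (fun j _ => ?_)
    push_cast
    ring

lemma key (α : ℂ) (L k : ℕ) (hk : 2 * k < L) :
    gegenCoeff α L k * ((L - 2 * k : ℕ) : ℂ)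
      = 2 * gam α L * gegenCoeff (α + 1) (L - 1) k := by
  have ha : 0 < L - 2 * k := by omega
  have h1 : L - 1 - 2 * k = (L - 2 * k) - 1 := by omega
  unfold gegenCoeff
  rw [prod_eq α L k hk, h1]
  set a := L - 2 * k with hadef
  have hfa : (Nat.factorial a : ℂ) = (a : ℂ) * (Nat.factorial (a - 1) : ℂ) := by
    rw [← Nat.mul_factorial_pred ha.ne']
    push_cast
    ring
  have hpow : (2 : ℂ) ^ a = 2 * 2 ^ (a - 1) := by
    conv_lhs => rw [show a = (a - 1) + 1 by omega]
    rw [pow_succ]; ring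
  have hane : (a : ℂ) ≠ 0 := Nat.cast_ne_zero.mpr (by omega)
  have hfk : (Nat.factorial k : ℂ) ≠ 0 := Nat.cast_ne_zero.mpr (Nat.factorial_ne_zero k)
  have hfa1 : (Nat.factorial (a - 1) : ℂ) ≠ 0 := Nat.cast_ne_zero.mpr (Nat.factorial_ne_zero _)
  rw [hfa, hpow]
  field_simp


end S11

/-- `x_n·𝒦_{λ,ν} = −2 γ(λ − (n−1)/2, ν−λ)·𝒦_{λ+1,ν}` as tempered distributions on ℝ^n,
tested against an arbitrary Schwartz function `φ`; `(x_n·T)(φ) = T(x_n φ)`. -/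
theorem stmt11 (n : ℕ) (hn : 2 ≤ n) (lam nu : ℂ) (l : ℤ) (hl : 0 ≤ l)
    (hln : nu - lam = (l : ℂ)) (φ : SchwartzMap (Fin n → ℝ) ℂ) :
    Kact n lam l (fun x => (x ⟨n - 1, by omega⟩ : ℂ) * φ x)
      = -2 * gam (lam - ((n : ℂ) - 1) / 2) l.toNat * Kact n (lam + 1) (l - 1) ⇑φ := by
  have hn0 : 0 < n := by omega
  have hφ : S11.Sm (n := n) ⇑φ := φ.smooth ⊤
  set i : Fin n := ⟨n - 1, by omega⟩ with hidef
  set L := l.toNat with hLdef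
  set α := lam - ((n : ℂ) - 1) / 2 with hαdef
  have htest : (fun x : Fin n → ℝ => ((x ⟨n - 1, by omega⟩ : ℝ) : ℂ) * φ x)
      = fun x => S11.coordC i x * φ x := rfl
  rw [htest]
  unfold Kact
  rw [if_pos hl]
  have hLHSfun : ∀ k : ℕ, lapP^[k] (fun x => S11.coordC i x * ⇑φ x)
      = fun x => S11.coordC i x * lapP^[k] ⇑φ x :=
    fun k => S11.lapP_iter_coord_mul i (Nat.le_refl _) hφ k
  have hval : ∀ k : ℕ, pdLast^[L - 2 * k] (lapP^[k] (fun x => S11.coordC i x * ⇑φ x)) 0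
      = ((L - 2 * k : ℕ) : ℂ) * pdLast^[L - 2 * k - 1] (lapP^[k] ⇑φ) 0 := by
    intro k
    rw [hLHSfun k]
    exact S11.pdLast_iter_coord_mul_zero hn0 (S11.lapP_iter_smooth hφ k) _
  rcases lt_or_ge l 1 with hl0 | hl1
  · -- l = 0 case
    have hL0 : L = 0 := by omega
    rw [if_neg (by omega : ¬ (0 : ℤ) ≤ l - 1), ← hLdef, hL0, Finset.sum_range_one]
    simp [S11.coordC_apply]
  · -- l ≥ 1 case
    have hL1 : 1 ≤ L := by omega
    have hl1' : (0 : ℤ) ≤ l - 1 := by omega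
    rw [if_pos hl1', ← hLdef]
    have htn : (l - 1).toNat = L - 1 := by omega
    have hα1 : lam + 1 - ((n : ℂ) - 1) / 2 = α + 1 := by rw [hαdef]; ring
    rw [htn, hα1]
    have step1 : (∑ k ∈ Finset.range (L / 2 + 1),
          gegenCoeff α L k * ((-1 : ℂ) ^ k * ((-1 : ℂ) ^ (L - 2 * k) *
            pdLast^[L - 2 * k] (lapP^[k] fun x => S11.coordC i x * ⇑φ x) 0)))
        = ∑ k ∈ Finset.range (L / 2 + 1),
          gegenCoeff α L k * ((-1 : ℂ) ^ k * ((-1 : ℂ) ^ (L - 2 * k) *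
            (((L - 2 * k : ℕ)) : ℂ) * pdLast^[L - 2 * k - 1] (lapP^[k] ⇑φ) 0)) :=
      Finset.sum_congr rfl (fun k _ => by rw [hval k]; ring)
    rw [step1]
    have step2 : (∑ k ∈ Finset.range (L / 2 + 1),
          gegenCoeff α L k * ((-1 : ℂ) ^ k * ((-1 : ℂ) ^ (L - 2 * k) *
            (((L - 2 * k : ℕ)) : ℂ) * pdLast^[L - 2 * k - 1] (lapP^[k] ⇑φ) 0)))
        = ∑ k ∈ Finset.range ((L - 1) / 2 + 1),
          gegenCoeff α L k * ((-1 : ℂ) ^ k * ((-1 : ℂ) ^ (L - 2 * k) *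
            (((L - 2 * k : ℕ)) : ℂ) * pdLast^[L - 2 * k - 1] (lapP^[k] ⇑φ) 0)) := by
      rcases Nat.mod_two_eq_zero_or_one L with hpar | hpar
      · have hsz : L / 2 + 1 = ((L - 1) / 2 + 1) + 1 := by omega
        rw [hsz, Finset.sum_range_succ]
        have hz : L - 2 * ((L - 1) / 2 + 1) = 0 := by omega
        rw [hz]
        simp
      · have : L / 2 = (L - 1) / 2 := by omega
        rw [this]
    rw [step2, Finset.mul_sum]
    refine Finset.sum_congr rfl (fun k hk => ?_)
    have hk2 : 2 * k < L := by
      have := Finset.mem_range.mp hk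
      omega
    have hidx : L - 1 - 2 * k = L - 2 * k - 1 := by omega
    have hsign : (-1 : ℂ) ^ (L - 2 * k) = -(-1 : ℂ) ^ (L - 2 * k - 1) := by
      conv_lhs => rw [show L - 2 * k = (L - 2 * k - 1) + 1 by omega]
      rw [pow_succ]
      ring
    have hkey := S11.key α L k hk2
    rw [hidx, hsign]
    linear_combination (-(-1 : ℂ) ^ k * (-1 : ℂ) ^ (L - 2 * k - 1) *
      pdLast^[L - 2 * k - 1] (lapP^[k] ⇑φ) 0) * hkey
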